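/- If F' is obtained from a linear forest F by a rotation removing edge uw and adding edge uv, where v is an endpoint of F, then the multiset of endpoints of F' equals the multiset of endpoints of F with v removed and w added. (Here an isolated vertex counts as an endpoint with multiplicity two.) -/

import Mathlib

open SimpleGraph

def IsLinearForest {V : Type*} (F : SimpleGraph V) : Prop :=
  F.IsAcyclic ∧ ∀ v, (F.neighborSet v).ncard ≤ 2

/-- The multiset of endpoints of a linear forest: each vertex `v` appears with
multiplicity `2 - deg(v)`, so isolated vertices are counted twice. -/
noncomputable def endMultiset {V : Type*} [Fintype V] (F : SimpleGraph V) : Multiset V :=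
  (Finset.univ.val : Multiset V).bind fun v =>
    Multiset.replicate (2 - (F.neighborSet v).ncard) v

lemma count_endMultiset {V : Type*} [Fintype V] [DecidableEq V] (F : SimpleGraph V) (x : V) :
    (endMultiset F).count x = 2 - (F.neighborSet x).ncard := by
  classical
  unfold endMultiset
  rw [Multiset.count_bind]
  have h : ((Finset.univ.val : Multiset V).map fun v =>
      (Multiset.replicate (2 - (F.neighborSet v).ncard) v).count x).sum
      = ∑ v : V, if x = v then 2 - (F.neighborSet v).ncard else 0 := by
    rw [Finset.sum]
    congr 1
    apply Multiset.map_congr rfl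
    intro v _
    simp [Multiset.count_replicate, eq_comm]
  rw [h]
  simp

lemma rotation_neighborSets {V : Type*} (F : SimpleGraph V) (u v w : V)
    (huw : F.Adj u w) (huv : u ≠ v) (hnadj : ¬ F.Adj u v) (hwv : w ≠ v)
    (F' : SimpleGraph V)
    (hF' : F' = SimpleGraph.fromEdgeSet ((F.edgeSet \ {s(u, w)}) ∪ {s(u, v)})) :
    F'.neighborSet v = insert u (F.neighborSet v) ∧
    F'.neighborSet w = F.neighborSet w \ {u} ∧
    F'.neighborSet u = insert v (F.neighborSet u \ {w}) ∧
    ∀ x, x ≠ u → x ≠ v → x ≠ w → F'.neighborSet x = F.neighborSet x := by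
  have hne : u ≠ w := huw.ne
  have hsymm : ∀ a b, F.Adj a b → F.Adj b a := fun a b h => h.symm
  have hadjne : ∀ a b, F.Adj a b → a ≠ b := fun a b h => h.ne
  refine ⟨?_, ?_, ?_, fun x hxu hxv hxw => ?_⟩ <;>
  · ext y
    simp only [hF', mem_neighborSet, fromEdgeSet_adj, Set.mem_union, Set.mem_diff,
      Set.mem_singleton_iff, mem_edgeSet, Sym2.eq_iff, Set.mem_insert_iff]
    constructor
    · rintro ⟨h | h, hne2⟩ <;> aesop
    · intro h
      aesop

/-- After a rotation removing `uw` and adding `uv` (where `v` is an endpoint of `F`),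
the multiset of endpoints of the new linear forest is obtained from that of `F` by
removing `v` and adding `w`. -/
theorem stmt_4 {V : Type*} [Fintype V] [DecidableEq V] (F : SimpleGraph V) (u v w : V)
    (hF : IsLinearForest F) (hv : (F.neighborSet v).ncard ≤ 1)
    (huw : F.Adj u w) (huv : u ≠ v) (hcase : w = v ∨ ¬ F.Adj u v)
    (F' : SimpleGraph V)
    (hF' : F' = SimpleGraph.fromEdgeSet ((F.edgeSet \ {s(u, w)}) ∪ {s(u, v)}))
    (hlin : IsLinearForest F') :
    endMultiset F' = w ::ₘ (endMultiset F).erase v := by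
  classical
  rcases hcase with rfl | hnadj
  · -- case w = v : F' = F
    have h1 : (F.edgeSet \ {s(u, w)}) ∪ {s(u, w)} = F.edgeSet := by
      rw [Set.diff_union_self]
      exact Set.union_eq_self_of_subset_right (by simp [huw])
    have hFF : F' = F := by rw [hF', h1, SimpleGraph.fromEdgeSet_edgeSet]
    rw [hFF]
    have hmem : w ∈ endMultiset F := by
      rw [← Multiset.count_pos, count_endMultiset]
      omega
    exact (Multiset.cons_erase hmem).symm
  · -- case ¬ F.Adj u v
    have hwv : w ≠ v := by rintro rfl; exact hnadj huw
    obtain ⟨hNv, hNw, hNu, hNx⟩ :=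
      rotation_neighborSets F u v w huw huv hnadj hwv F' hF'
    have hdv : (F'.neighborSet v).ncard = (F.neighborSet v).ncard + 1 := by
      rw [hNv, Set.ncard_insert_of_notMem (fun h => hnadj (SimpleGraph.mem_neighborSet F v u |>.mp h).symm) (Set.toFinite _)]
    have hwmem : u ∈ F.neighborSet w := huw.symm
    have hdw1 : 1 ≤ (F.neighborSet w).ncard := by
      rw [Nat.one_le_iff_ne_zero, ← Nat.pos_iff_ne_zero, Set.ncard_pos (Set.toFinite _)]
      exact ⟨u, hwmem⟩
    have hdw : (F'.neighborSet w).ncard = (F.neighborSet w).ncard - 1 := by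
      rw [hNw, Set.ncard_diff_singleton_of_mem hwmem]
    have humem : w ∈ F.neighborSet u := huw
    have hdu1 : 1 ≤ (F.neighborSet u).ncard := by
      rw [Nat.one_le_iff_ne_zero, ← Nat.pos_iff_ne_zero, Set.ncard_pos (Set.toFinite _)]
      exact ⟨w, humem⟩
    have hdu : (F'.neighborSet u).ncard = (F.neighborSet u).ncard := by
      rw [hNu, Set.ncard_insert_of_notMem (by simp [hnadj]) (Set.toFinite _),
        Set.ncard_diff_singleton_of_mem humem]
      omega
    rw [Multiset.ext]
    intro x
    rw [count_endMultiset, Multiset.count_cons]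
    by_cases hxv : x = v
    · subst hxv
      rw [Multiset.count_erase_self, count_endMultiset, if_neg hwv.symm, hdv]
      omega
    · rw [Multiset.count_erase_of_ne hxv, count_endMultiset]
      by_cases hxw : x = w
      · subst hxw
        rw [if_pos rfl, hdw]
        have := hF.2 x
        omega
      · rw [if_neg hxw]
        by_cases hxu : x = u
        · subst hxu; rw [hdu]; omega
        · rw [hNx x hxu hxv hxw]; omega
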